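/- Let X = (V, r) be a symmetric weighted complete directed graph on n vertices, and let P_{kRW} be the random walk on (V, k·r), i.e., the weighted graph with weights C_{kRW}(u, w) = k·r(u, w). Let G = S_N (N = kn) be the weighted group of the interchange process on the extended graph X̃ obtained by replacing each vertex v by k copies, with weights as in the extended-graph construction. Then the double quotient (∏_v H^v)\P̂(G)/H_{N−1}, where H^v is the subgroup permuting the k copies of v and H_{N−1} permutes {1,…,N−1}, is isomorphic as a weighted complete directed graph to P_{kRW}. In particular, its spectral gap equals k times the spectral gap of the random walk on X. -/

import Mathlib

open scoped Classical
open Finset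

noncomputable section

/-- The generator of a weighted complete directed graph `P = (S, C)`:
`L^P f (x) = ∑ y, C x y * (f y - f x)`. -/
def gen {S : Type*} [Fintype S] (C : S → S → ℝ) (f : S → ℝ) (x : S) : ℝ :=
  ∑ y, C x y * (f y - f x)

/-- Minus the generator, as a linear endomorphism of `S → ℝ`. -/
def negGen {S : Type*} [Fintype S] (C : S → S → ℝ) : Module.End ℝ (S → ℝ) where
  toFun f := fun x => -∑ y, C x y * (f y - f x)
  map_add' f g := by
    funext x
    simp only [Pi.add_apply]
    rw [← neg_add, ← Finset.sum_add_distrib]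
    congr 1
    exact Finset.sum_congr rfl fun y _ => by ring
  map_smul' c f := by
    funext x
    simp only [Pi.smul_apply, smul_eq_mul, RingHom.id_apply]
    rw [mul_neg, Finset.mul_sum]
    congr 1
    exact Finset.sum_congr rfl fun y _ => by ring

/-- The spectral gap: the smallest nonzero eigenvalue of `-L^P`
(the second smallest eigenvalue, since `0` is always an eigenvalue). -/
def spectralGap {S : Type*} [Fintype S] (C : S → S → ℝ) : ℝ :=
  sInf {lam : ℝ | lam ≠ 0 ∧ Module.End.HasEigenvalue (negGen C) lam}

/-- Irreducibility: any two vertices are joined by a path of nonzero-weight edges. -/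
def GraphIrreducible {S : Type*} (C : S → S → ℝ) : Prop :=
  ∀ x y : S, Relation.ReflTransGen (fun a b => C a b ≠ 0) x y

/-- Reversibility with respect to `μ`. -/
def GraphReversible {S : Type*} (C : S → S → ℝ) (μ : S → ℝ) : Prop :=
  ∀ x y : S, C y x * μ x = C x y * μ y

/-- `φ` is a morphism of weighted complete directed graphs:
it intertwines the generators. -/
def IsMorphism {S₁ S₂ : Type*} [Fintype S₁] [Fintype S₂]
    (C₁ : S₁ → S₁ → ℝ) (C₂ : S₂ → S₂ → ℝ) (φ : S₁ → S₂) : Prop :=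
  ∀ (f : S₂ → ℝ) (x : S₁), gen C₁ (f ∘ φ) x = gen C₂ f (φ x)

/-- The weight-sum characterization of morphisms of weighted complete directed graphs:
`C₂ (φ x) y = ∑ (y' ∈ φ⁻¹ y), C₁ x y'` whenever `φ x ≠ y`. -/
def IsMorphismW {S₁ S₂ : Type*} [Fintype S₁]
    (C₁ : S₁ → S₁ → ℝ) (C₂ : S₂ → S₂ → ℝ) (φ : S₁ → S₂) : Prop :=
  ∀ (x : S₁) (y : S₂), φ x ≠ y →
    C₂ (φ x) y = ∑ y' ∈ Finset.univ.filter (fun y' => φ y' = y), C₁ x y'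

/-- A weighted group `(G, C)` is irreducible. -/
def GroupIrreducible {G : Type*} [Group G] (C : G → ℝ) : Prop :=
  ∀ x y : G, Relation.ReflTransGen (fun a b => C (b * a⁻¹) ≠ 0) x y

/-- A weighted group `(G, C)` is reversible with respect to `μ`. -/
def GroupReversible {G : Type*} [Group G] (C : G → ℝ) (μ : G → ℝ) : Prop :=
  ∀ g h : G, C h * μ g = C h⁻¹ * μ (h * g)

/-- The weight of the Cayley-type graph `P̂(G)` : `Ĉ(x, y) = C_G (y * x⁻¹)`. -/
def hatC {G : Type*} [Group G] (C : G → ℝ) : G → G → ℝ := fun x y => C (y * x⁻¹)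

/-- `dRel H H' x y` iff `y ∈ H * x * H'`. -/
def dRel {G : Type*} [Group G] (H H' : Subgroup G) (x y : G) : Prop :=
  ∃ h ∈ H, ∃ h' ∈ H', y = h * x * h'

theorem dRel_equivalence {G : Type*} [Group G] (H H' : Subgroup G) :
    Equivalence (dRel H H') where
  refl x := ⟨1, H.one_mem, 1, H'.one_mem, by simp⟩
  symm := by
    rintro x y ⟨h, hh, h', hh', rfl⟩
    exact ⟨h⁻¹, H.inv_mem hh, h'⁻¹, H'.inv_mem hh', by simp [mul_assoc]⟩
  trans := by
    rintro x y z ⟨h, hh, h', hh', rfl⟩ ⟨g, hg, g', hg', rfl⟩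
    exact ⟨g * h, H.mul_mem hg hh, h' * g', H'.mul_mem hh' hg', by simp [mul_assoc]⟩

/-- The setoid of double cosets `H\G/H'`. -/
def dSetoid {G : Type*} [Group G] (H H' : Subgroup G) : Setoid G :=
  ⟨dRel H H', dRel_equivalence H H'⟩

/-- The set of double cosets `H\G/H'`. -/
abbrev DQuot {G : Type*} [Group G] (H H' : Subgroup G) : Type _ := Quotient (dSetoid H H')

/-- The double coset `HxH'` as an element of `H\G/H'`. -/
def dmk {G : Type*} [Group G] (H H' : Subgroup G) (x : G) : DQuot H H' :=
  Quotient.mk (dSetoid H H') x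

noncomputable instance {G : Type*} [Group G] [Fintype G] (H H' : Subgroup G) :
    Fintype (DQuot H H') :=
  @Quotient.fintype _ _ (dSetoid H H') (Classical.decRel _)

/-- The double coset `HyH'` as a finset. -/
def dFinset {G : Type*} [Group G] [Fintype G] (H H' : Subgroup G) (y : G) : Finset G :=
  Finset.univ.filter (fun z => dRel H H' y z)

/-- The pair of subgroups `(H, H')` is regular for the weight `C`. -/
def IsRegularPair {G : Type*} [Group G] [Fintype G] (C : G → ℝ) (H H' : Subgroup G) : Prop :=
  ∀ x y : G, dFinset H H' x ≠ dFinset H H' y → ∀ h ∈ H,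
    ∑ y' ∈ dFinset H H' y, C (y' * x⁻¹) = ∑ y' ∈ dFinset H H' y, C (y' * x⁻¹ * h⁻¹)

/-- The weight of the quotient graph `H\P̂(G)/H'` :
`C̄([x], [y]) = ∑ (y' ∈ HyH'), C_G (y' * x⁻¹)` for `[x] ≠ [y]`, and `0` on the diagonal. -/
def qC {G : Type*} [Group G] [Fintype G] (C : G → ℝ) (H H' : Subgroup G) :
    DQuot H H' → DQuot H H' → ℝ :=
  fun q q' => if q = q' then 0
    else ∑ z ∈ Finset.univ.filter (fun z => dmk H H' z = q'), C (z * (Quotient.out q)⁻¹)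

/-- The weight of the extended graph `X̃`: vertices are `V × Fin k` (each vertex of `V`
is replaced by `k` copies); copies of distinct vertices keep the weight `r`, distinct
copies of the same vertex are joined with weight `∑ (v' ≠ v), r v v'`. -/
def extWeight {V : Type*} [Fintype V] (k : ℕ) (r : V → V → ℝ) :
    V × Fin k → V × Fin k → ℝ :=
  fun a b =>
    if a = b then 0
    else if a.1 = b.1 then ∑ v ∈ Finset.univ.filter (fun v => v ≠ a.1), r a.1 v
    else r a.1 b.1

/-- The subgroup `∏_v H^v` of permutations preserving each block of copies,
i.e. preserving the `V`-component through the labeling `ξ`. -/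
def Hleft {V : Type*} [Fintype V] {k N : ℕ} (ξ : Fin N ≃ V × Fin k) :
    Subgroup (Equiv.Perm (Fin N)) where
  carrier := {g | ∀ a : Fin N, (ξ (g a)).1 = (ξ a).1}
  one_mem' := by intro a; simp
  mul_mem' := by
    intro g h hg hh a
    simpa [Equiv.Perm.mul_apply] using (hg (h a)).trans (hh a)
  inv_mem' := by
    intro g hg a
    have h := hg (g⁻¹ a)
    rw [← Equiv.Perm.mul_apply, mul_inv_cancel, Equiv.Perm.one_apply] at h
    exact h.symm

open scoped Pointwise

/-- Auxiliary: application of `negGen`. -/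
lemma negGen_apply' {S : Type*} [Fintype S] (C : S → S → ℝ) (f : S → ℝ) (x : S) :
    negGen C f x = -∑ y, C x y * (f y - f x) := rfl

lemma negGen_const_mul {S : Type*} [Fintype S] (c : ℝ) (C : S → S → ℝ) :
    negGen (fun x y => c * C x y) = c • negGen C := by
  apply LinearMap.ext
  intro f
  funext x
  have h1 : (c • negGen C) f x = c * negGen C f x := rfl
  rw [h1, negGen_apply', negGen_apply', mul_neg, Finset.mul_sum]
  congr 1
  exact Finset.sum_congr rfl fun y _ => by ring

lemma hasEigenvalue_negGen_of_comp {S T : Type*} [Fintype S] [Fintype T]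
    (C : S → S → ℝ) (D : T → T → ℝ) (φ : T → S) (hφ : Function.Bijective φ)
    (hD : ∀ x y, D x y = C (φ x) (φ y)) (μ : ℝ)
    (h : Module.End.HasEigenvalue (negGen C) μ) :
    Module.End.HasEigenvalue (negGen D) μ := by
  obtain ⟨f, hf⟩ := h.exists_hasEigenvector
  have hmem : negGen C f = μ • f := Module.End.mem_eigenspace_iff.mp hf.1
  refine Module.End.hasEigenvalue_of_hasEigenvector (x := f ∘ φ)
    ⟨Module.End.mem_eigenspace_iff.mpr ?_, ?_⟩
  · funext x
    have hcomp : negGen D (f ∘ φ) x = negGen C f (φ x) := by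
      rw [negGen_apply', negGen_apply']
      congr 1
      exact Fintype.sum_bijective φ hφ _ _ (fun y => by rw [hD]; rfl)
    rw [hcomp, hmem]
    rfl
  · intro h0
    obtain ⟨s, hs⟩ : ∃ s, f s ≠ 0 := by
      by_contra hc
      push_neg at hc
      exact hf.2 (funext hc)
    obtain ⟨x, rfl⟩ := hφ.2 s
    exact hs (congrFun h0 x)

lemma hasEigenvalue_negGen_comp_iff {S T : Type*} [Fintype S] [Fintype T]
    (C : S → S → ℝ) (D : T → T → ℝ) (φ : T → S) (hφ : Function.Bijective φ)
    (hD : ∀ x y, D x y = C (φ x) (φ y)) (μ : ℝ) :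
    Module.End.HasEigenvalue (negGen D) μ ↔ Module.End.HasEigenvalue (negGen C) μ := by
  constructor
  · intro h
    refine hasEigenvalue_negGen_of_comp D C (Equiv.ofBijective φ hφ).symm
      (Equiv.ofBijective φ hφ).symm.bijective (fun s t => ?_) μ h
    have h1 : ∀ s, φ ((Equiv.ofBijective φ hφ).symm s) = s := fun s =>
      (Equiv.ofBijective φ hφ).apply_symm_apply s
    rw [hD, h1, h1]
  · exact hasEigenvalue_negGen_of_comp C D φ hφ hD μ

lemma hasEigenvalue_smul_iff' {M : Type*} [AddCommGroup M] [Module ℝ M]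
    (T : Module.End ℝ M) (c μ : ℝ) (hc : c ≠ 0) :
    Module.End.HasEigenvalue (c • T) (c * μ) ↔ Module.End.HasEigenvalue T μ := by
  constructor
  · intro h
    obtain ⟨v, hv⟩ := h.exists_hasEigenvector
    have h1 : c • T v = (c * μ) • v := Module.End.mem_eigenspace_iff.mp hv.1
    have h2 : T v = μ • v := by
      apply smul_right_injective M hc
      show c • T v = c • (μ • v)
      rw [h1, mul_smul]
    exact Module.End.hasEigenvalue_of_hasEigenvector
      ⟨Module.End.mem_eigenspace_iff.mpr h2, hv.2⟩
  · intro h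
    obtain ⟨v, hv⟩ := h.exists_hasEigenvector
    have h1 : T v = μ • v := Module.End.mem_eigenspace_iff.mp hv.1
    have h2 : (c • T) v = (c * μ) • v := by
      have : (c • T) v = c • T v := rfl
      rw [this, h1, mul_smul]
    exact Module.End.hasEigenvalue_of_hasEigenvector
      ⟨Module.End.mem_eigenspace_iff.mpr h2, hv.2⟩

lemma dRel_iff_block {V : Type*} [Fintype V] {k N : ℕ} (ξ : Fin N ≃ V × Fin k)
    (e : Fin N) (g g' : Equiv.Perm (Fin N)) :
    dRel (Hleft ξ) (MulAction.stabilizer (Equiv.Perm (Fin N)) e) g g' ↔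
      (ξ (g e)).1 = (ξ (g' e)).1 := by
  constructor
  · rintro ⟨h, hh, h', hh', rfl⟩
    have he' : h' e = e := hh'
    have h1 : (h * g * h') e = h (g e) := by
      simp [Equiv.Perm.mul_apply, he']
    rw [h1]
    exact (hh (g e)).symm
  · intro hblk
    refine ⟨Equiv.swap (g e) (g' e), ?_, (Equiv.swap (g e) (g' e) * g)⁻¹ * g', ?_, ?_⟩
    · intro a
      rcases eq_or_ne a (g e) with rfl | h1
      · rw [Equiv.swap_apply_left]; exact hblk.symm
      rcases eq_or_ne a (g' e) with rfl | h2
      · rw [Equiv.swap_apply_right]; exact hblk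
      · rw [Equiv.swap_apply_of_ne_of_ne h1 h2]
    · show ((Equiv.swap (g e) (g' e) * g)⁻¹ * g') • e = e
      have h1 : (Equiv.swap (g e) (g' e) * g) e = g' e := by
        simp [Equiv.Perm.mul_apply, Equiv.swap_apply_left]
      set σ := Equiv.swap (g e) (g' e) * g with hσ
      have h2 : σ⁻¹ (g' e) = e := by
        rw [← h1]; exact Equiv.symm_apply_apply σ e
      show (σ⁻¹ * g') e = e
      rw [Equiv.Perm.mul_apply, h2]
    · group

theorem stmt_18 {V : Type*} [Fintype V] [Nonempty V]
    (r : V → V → ℝ) (hrs : ∀ u w, r u w = r w u) (hrd : ∀ u, r u u = 0)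
    (hrnn : ∀ u w, 0 ≤ r u w)
    (k N : ℕ) (hk : 1 ≤ k) (hN : N = k * Fintype.card V) (hNpos : 0 < N)
    (ξ : Fin N ≃ V × Fin k)
    -- the weight on the symmetric group `S_N` of the interchange process on `X̃`
    (CG : Equiv.Perm (Fin N) → ℝ)
    (hCG1 : ∀ i j : Fin N, i ≠ j →
      CG (Equiv.swap i j) = extWeight k r (ξ i) (ξ j))
    (hCG0 : ∀ g : Equiv.Perm (Fin N),
      (¬∃ i j : Fin N, i ≠ j ∧ g = Equiv.swap i j) → CG g = 0)
    -- the subgroup `H_{N-1}` of permutations fixing the last point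
    (e : Fin N) (he : e = ⟨N - 1, Nat.sub_lt hNpos one_pos⟩) :
    ∃ ψ : DQuot (Hleft ξ) (MulAction.stabilizer (Equiv.Perm (Fin N)) e) → V,
      Function.Bijective ψ ∧
      (∀ q q', q ≠ q' →
        qC CG (Hleft ξ) (MulAction.stabilizer (Equiv.Perm (Fin N)) e) q q' =
          (k : ℝ) * r (ψ q) (ψ q')) ∧
      spectralGap (qC CG (Hleft ξ) (MulAction.stabilizer (Equiv.Perm (Fin N)) e)) =
        (k : ℝ) * spectralGap r := by
  classical
  have hkR : (k : ℝ) ≠ 0 := Nat.cast_ne_zero.mpr (by omega)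
  set H := Hleft ξ with hHdef
  set H' := MulAction.stabilizer (Equiv.Perm (Fin N)) e with hH'def
  have hlift : ∀ g g' : Equiv.Perm (Fin N), dRel H H' g g' → (ξ (g e)).1 = (ξ (g' e)).1 :=
    fun g g' h => (dRel_iff_block ξ e g g').mp h
  set ψ : DQuot H H' → V := Quotient.lift (fun g => (ξ (g e)).1) hlift with hψdef
  have hψmk : ∀ g, ψ (dmk H H' g) = (ξ (g e)).1 := fun g => rfl
  have hinj : Function.Injective ψ := fun q q' =>
    Quotient.inductionOn₂ q q' (fun g g' h =>
      Quotient.sound ((dRel_iff_block ξ e g g').mpr h))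
  have hsurj : Function.Surjective ψ := by
    intro v
    refine ⟨dmk H H' (Equiv.swap e (ξ.symm (v, ⟨0, hk⟩))), ?_⟩
    show (ξ (Equiv.swap e (ξ.symm (v, ⟨0, hk⟩)) e)).1 = v
    rw [Equiv.swap_apply_left, Equiv.apply_symm_apply]
  have hψout : ∀ q : DQuot H H', ψ q = (ξ (Quotient.out q e)).1 := fun q =>
    ((congrArg ψ (Quotient.out_eq q)).symm).trans (hψmk _)
  have hmkiff : ∀ (z : Equiv.Perm (Fin N)) (q : DQuot H H'),
      dmk H H' z = q ↔ (ξ (z e)).1 = ψ q := by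
    intro z q
    constructor
    · intro h
      rw [← h]
      exact (hψmk z).symm
    · intro h
      rw [hψout q] at h
      rw [← Quotient.out_eq q]
      exact Quotient.sound ((dRel_iff_block ξ e z (Quotient.out q)).mpr h)
  have hweight : ∀ q q' : DQuot H H', q ≠ q' →
      qC CG H H' q q' = (k : ℝ) * r (ψ q) (ψ q') := by
    intro q q' hqq'
    simp only [qC, if_neg hqq']
    set x := Quotient.out q with hxdef
    set a := x e with hadef
    have hva : (ξ a).1 = ψ q := (hψout q).symm
    have hvw : ψ q ≠ ψ q' := fun h => hqq' (hinj h)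
    have hxa : x⁻¹ a = e := Equiv.symm_apply_apply x e
    have key : ∀ z : Equiv.Perm (Fin N), dmk H H' z = q' → CG (z * x⁻¹) ≠ 0 →
        z * x⁻¹ = Equiv.swap a (z e) ∧ a ≠ z e := by
      intro z hzq hz0
      obtain ⟨i, j, hij, hzs⟩ : ∃ i j : Fin N, i ≠ j ∧ z * x⁻¹ = Equiv.swap i j := by
        by_contra hc
        exact hz0 (hCG0 _ hc)
      have hze : z e = (z * x⁻¹) a := by
        rw [Equiv.Perm.mul_apply, hxa]
      have hzblock : (ξ (z e)).1 = ψ q' := (hmkiff z q').mp hzq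
      have haij : a = i ∨ a = j := by
        by_contra hc
        push_neg at hc
        have h1 : (z * x⁻¹) a = a := by
          rw [hzs]
          exact Equiv.swap_apply_of_ne_of_ne hc.1 hc.2
        rw [h1] at hze
        rw [hze] at hzblock
        exact hvw (hva.symm.trans hzblock)
      rcases haij with rfl | rfl
      · have hz2 : z e = j := by rw [hze, hzs, Equiv.swap_apply_left]
        exact ⟨by rw [hzs, hz2], by rw [hz2]; exact hij⟩
      · have hz2 : z e = i := by rw [hze, hzs, Equiv.swap_apply_right]
        exact ⟨by rw [hzs, hz2, Equiv.swap_comm], by rw [hz2]; exact fun h => hij h.symm⟩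
    have hsum : ∑ z ∈ Finset.univ.filter (fun z => dmk H H' z = q'), CG (z * x⁻¹)
        = ∑ b ∈ Finset.univ.filter (fun b : Fin N => (ξ b).1 = ψ q'),
            CG (Equiv.swap a b) := by
      refine Finset.sum_bij_ne_zero (fun z _ _ => z e) ?_ ?_ ?_ ?_
      · intro z h1 h2
        simp only [Finset.mem_filter, Finset.mem_univ, true_and] at h1 ⊢
        exact (hmkiff z q').mp h1
      · intro z1 h11 h12 z2 h21 h22 heq
        simp only [Finset.mem_filter, Finset.mem_univ, true_and] at h11 h21
        have k1 := (key z1 h11 h12).1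
        have k2 := (key z2 h21 h22).1
        have heq' : z1 e = z2 e := heq
        have h3 : z1 * x⁻¹ = z2 * x⁻¹ := by rw [k1, k2, heq']
        exact mul_right_cancel h3
      · intro b hb hb0
        simp only [Finset.mem_filter, Finset.mem_univ, true_and] at hb
        have hab : a ≠ b := fun h => hvw (by rw [← hva, h, hb])
        have hbe : (Equiv.swap a b * x) e = b := by
          rw [Equiv.Perm.mul_apply, ← hadef, Equiv.swap_apply_left]
        refine ⟨Equiv.swap a b * x, ?_, ?_, hbe⟩
        · simp only [Finset.mem_filter, Finset.mem_univ, true_and]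
          exact (hmkiff _ q').mpr (by rw [hbe, hb])
        · rw [mul_inv_cancel_right]
          exact hb0
      · intro z h1 h2
        simp only [Finset.mem_filter, Finset.mem_univ, true_and] at h1
        rw [(key z h1 h2).1]
    rw [hsum]
    have hconst : ∀ b ∈ Finset.univ.filter (fun b : Fin N => (ξ b).1 = ψ q'),
        CG (Equiv.swap a b) = r (ψ q) (ψ q') := by
      intro b hb
      simp only [Finset.mem_filter, Finset.mem_univ, true_and] at hb
      have hab : a ≠ b := fun h => hvw (by rw [← hva, h, hb])
      have h1 : ξ a ≠ ξ b := fun h => hvw (by rw [← hva, h, hb])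
      have h2 : (ξ a).1 ≠ (ξ b).1 := by rw [hva, hb]; exact hvw
      rw [hCG1 a b hab, extWeight, if_neg h1, if_neg h2, hva, hb]
    have hcard : (Finset.univ.filter (fun b : Fin N => (ξ b).1 = ψ q')).card = k := by
      have eqv : {b : Fin N // (ξ b).1 = ψ q'} ≃ Fin k :=
          { toFun := fun b => (ξ b.1).2
            invFun := fun i => ⟨ξ.symm (ψ q', i), by rw [Equiv.apply_symm_apply]⟩
            left_inv := by
              rintro ⟨b, hb⟩
              apply Subtype.ext
              show ξ.symm (ψ q', (ξ b).2) = b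
              rw [← hb]
              simp
            right_inv := fun i => by
              show (ξ (ξ.symm (ψ q', i))).2 = i
              rw [Equiv.apply_symm_apply] }
      calc (Finset.univ.filter (fun b : Fin N => (ξ b).1 = ψ q')).card
          = Fintype.card {b : Fin N // (ξ b).1 = ψ q'} := (Fintype.card_subtype _).symm
        _ = Fintype.card (Fin k) := Fintype.card_congr eqv
        _ = k := Fintype.card_fin k
    rw [Finset.sum_congr rfl hconst, Finset.sum_const, nsmul_eq_mul, hcard]
  have eqC : ∀ q q', qC CG H H' q q' = (k : ℝ) * r (ψ q) (ψ q') := by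
    intro q q'
    rcases eq_or_ne q q' with rfl | h
    · simp [qC, hrd]
    · exact hweight q q' h
  have hbij : Function.Bijective ψ := ⟨hinj, hsurj⟩
  have hgap : spectralGap (qC CG H H') = (k : ℝ) * spectralGap r := by
    have hseteq : {lam : ℝ | lam ≠ 0 ∧ Module.End.HasEigenvalue (negGen (qC CG H H')) lam}
        = (k : ℝ) • {lam : ℝ | lam ≠ 0 ∧ Module.End.HasEigenvalue (negGen r) lam} := by
      ext lam
      simp only [Set.mem_setOf_eq, Set.mem_smul_set, smul_eq_mul]
      constructor
      · rintro ⟨h0, heig⟩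
        refine ⟨lam / k, ⟨div_ne_zero h0 hkR, ?_⟩, by field_simp⟩
        have h1 : Module.End.HasEigenvalue (negGen (fun v w => (k : ℝ) * r v w)) lam :=
          (hasEigenvalue_negGen_comp_iff (fun v w => (k : ℝ) * r v w) (qC CG H H')
            ψ hbij eqC lam).mp heig
        rw [negGen_const_mul] at h1
        have h2 : (k : ℝ) * (lam / k) = lam := by field_simp
        rw [← h2] at h1
        exact (hasEigenvalue_smul_iff' _ _ _ hkR).mp h1
      · rintro ⟨μ, ⟨hμ0, hμeig⟩, rfl⟩
        refine ⟨mul_ne_zero hkR hμ0, ?_⟩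
        apply (hasEigenvalue_negGen_comp_iff (fun v w => (k : ℝ) * r v w) (qC CG H H')
          ψ hbij eqC _).mpr
        rw [negGen_const_mul]
        exact (hasEigenvalue_smul_iff' _ _ _ hkR).mpr hμeig
    rw [spectralGap, spectralGap, hseteq, Real.sInf_smul_of_nonneg (by positivity)]
    rfl
  exact ⟨ψ, hbij, hweight, hgap⟩
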